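/- Let G be a group and d ≥ 1, and suppose α_1, ..., α_{2^d} is an enumeration of all upper faces of {0,1}^d (faces containing the all-ones vertex) such that codim(α_j) is nondecreasing in j. Then the map Ψ(h_1, ..., h_{2^d}) = h_1^(α_1) · h_2^(α_2) · ... · h_{2^d}^(α_{2^d}), defined on the product ∏_{j=1}^{2^d} G_{codim(α_j)} of lower central series terms (with G_0 = G), is injective into G^{2^d}. -/

import Mathlib

open scoped Classical Pointwise

noncomputable section

/-- A face of the cube {0,1}^d of codimension `j`: obtained by fixing the values of a
set `S` of `j` coordinates. -/
def IsFace {d : ℕ} (α : Set (Fin d → Bool)) (j : ℕ) : Prop :=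
  ∃ (S : Finset (Fin d)) (v : Fin d → Bool), S.card = j ∧ α = {ε | ∀ i ∈ S, ε i = v i}

/-- The element `g^(α)` of `G^{2^d}`: entry `g` on vertices of `α`, identity elsewhere. -/
def faceEl {G : Type*} [Group G] {d : ℕ} (α : Set (Fin d → Bool)) (g : G) :
    (Fin d → Bool) → G :=
  fun ε => if ε ∈ α then g else 1

/-- The Host-Kra cube group of order `d` associated with `G`: the subgroup of `G^{2^d}`
generated by all `g^(α)` with `α` a facet (codimension-1 face). -/
def HK (G : Type*) [Group G] (d : ℕ) : Subgroup ((Fin d → Bool) → G) :=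
  Subgroup.closure {x | ∃ (g : G) (α : Set (Fin d → Bool)), IsFace α 1 ∧ x = faceEl α g}

/-- The upper face of `{0,1}^d` determined by `S ⊆ [d]`: the coordinates in `S` are
fixed to 1. Its codimension is `S.card`. -/
def upFace {d : ℕ} (S : Finset (Fin d)) : Set (Fin d → Bool) :=
  {ε | ∀ i ∈ S, ε i = true}

/-- Auxiliary: if two tuples agree off index `j`, then the list of one is obtained from the
list of the other by setting the entry at `j`. -/
lemma ofFn_eq_set {M : Type*} {n : ℕ} (f g : Fin n → M) (j : Fin n)
    (hfg : ∀ i, i ≠ j → f i = g i) :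
    List.ofFn g = (List.ofFn f).set j (g j) := by
  apply List.ext_getElem
  · simp
  · intro i h1 h2
    simp only [List.length_ofFn] at h1 h2
    rw [List.getElem_ofFn, List.getElem_set]
    split
    · next heq =>
      congr 1
      exact Fin.ext heq.symm
    · next hne =>
      rw [List.getElem_ofFn]
      exact (hfg ⟨i, by simpa using h2⟩ (fun H => hne (congrArg Fin.val H).symm)).symm

/-- given an enumeration `e` of all upper faces of `{0,1}^d` with
nondecreasing codimension, the map
`Ψ(h₁,…,h_{2^d}) = h₁^(α₁) ⋯ h_{2^d}^(α_{2^d})`, defined on tuples with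
`h j ∈ G_{codim(α_j)}` (where `G_0 = G_1 = G` and `G_k = lowerCentralSeries G (k-1)`),
is injective. -/
theorem stmt18 (G : Type*) [Group G] (d : ℕ) (hd : 1 ≤ d)
    (e : Fin (2 ^ d) → Finset (Fin d)) (hbij : Function.Bijective e)
    (hmono : ∀ i j : Fin (2 ^ d), i ≤ j → (e i).card ≤ (e j).card)
    (h h' : Fin (2 ^ d) → G)
    (hh : ∀ j, h j ∈ (⊤ : Subgroup G).lowerCentralSeries ((e j).card - 1))
    (hh' : ∀ j, h' j ∈ (⊤ : Subgroup G).lowerCentralSeries ((e j).card - 1))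
    (heq : (List.ofFn fun j => faceEl (upFace (e j)) (h j)).prod =
           (List.ofFn fun j => faceEl (upFace (e j)) (h' j)).prod) :
    h = h' := by
  have hinj := hbij.injective
  have key : ∀ n (j : Fin (2 ^ d)), (e j).card = n → h j = h' j := by
    intro n
    induction n using Nat.strong_induction_on with
    | _ n IH =>
      intro j0 hcard
      -- the vertex with support `e j0`
      set ε : Fin d → Bool := fun i => decide (i ∈ e j0) with hεdef
      have hmem : ∀ S : Finset (Fin d), ε ∈ upFace S ↔ S ⊆ e j0 := by
        intro S
        constructor
        · intro hS i hi
          have := hS i hi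
          simpa [hεdef] using this
        · intro hS i hi
          simp [hεdef, hS hi]
      set f : Fin (2 ^ d) → G := fun j => if e j ⊆ e j0 then h j else 1 with hfdef
      set f' : Fin (2 ^ d) → G := fun j => if e j ⊆ e j0 then h' j else 1 with hf'def
      have heval := congrFun heq ε
      rw [Pi.list_prod_apply, Pi.list_prod_apply, List.map_ofFn, List.map_ofFn] at heval
      have hfL : (fun x => x ε) ∘ (fun j => faceEl (upFace (e j)) (h j)) = f := by
        funext j
        simp only [Function.comp, faceEl, hfdef]
        by_cases hs : e j ⊆ e j0
        · rw [if_pos ((hmem (e j)).2 hs), if_pos hs]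
        · rw [if_neg (fun H => hs ((hmem (e j)).1 H)), if_neg hs]
      have hf'L : (fun x => x ε) ∘ (fun j => faceEl (upFace (e j)) (h' j)) = f' := by
        funext j
        simp only [Function.comp, faceEl, hf'def]
        by_cases hs : e j ⊆ e j0
        · rw [if_pos ((hmem (e j)).2 hs), if_pos hs]
        · rw [if_neg (fun H => hs ((hmem (e j)).1 H)), if_neg hs]
      rw [hfL, hf'L] at heval
      -- f and f' agree off j0
      have hne : ∀ i : Fin (2 ^ d), i ≠ j0 → f i = f' i := by
        intro i hi
        by_cases hs : e i ⊆ e j0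
        · have hss : e i ⊂ e j0 :=
            hs.ssubset_of_ne (fun H => hi (hinj H))
          have hlt : (e i).card < n := hcard ▸ Finset.card_lt_card hss
          have := IH _ hlt i rfl
          simp [hfdef, hf'def, hs, this]
        · simp [hfdef, hf'def, hs]
      have h1 : List.ofFn f = (List.ofFn f).set j0 (f j0) :=
        ofFn_eq_set f f j0 (fun _ _ => rfl)
      have h2 : List.ofFn f' = (List.ofFn f).set j0 (f' j0) :=
        ofFn_eq_set f f' j0 hne
      rw [h1, h2, List.prod_set, List.prod_set] at heval
      have hjlt : (j0 : ℕ) < (List.ofFn f).length := by simp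
      rw [if_pos hjlt, if_pos hjlt] at heval
      have hff' : f j0 = f' j0 := by
        have := mul_right_cancel heval
        exact mul_left_cancel this
      simpa [hfdef, hf'def] using hff'
  funext j
  exact key _ j rfl
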